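/- Let V be a real inner product space and let J, K be orthogonal complex structures on V with J ∘ K = K ∘ J. Let v ∈ V satisfy ⟨K(v), J(v)⟩ = 0, and set E₁ := v − K(J(v)) and E₃ := v + K(J(v)). Then: (1) J(E₁) = K(E₁); (2) J(E₃) = −K(E₃); (3) ⟨E₁, E₃⟩ = 0; (4) ⟨J(E₁), E₃⟩ = 0; and (5) ‖E₁‖² = ‖E₃‖² = 2‖v‖², so E₁ ≠ 0 and E₃ ≠ 0 whenever v ≠ 0. (This is the construction in the proof of the paper's Proposition 8 producing an orthogonal pair E₁, E₃ with JE₁ = KE₁ and JE₃ = −KE₃ from a vector v with ⟨K(v), J(v)⟩ = 0 and K(J(v)) = J(K(v)).) -/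

import Mathlib

open scoped RealInnerProductSpace

/-- **Construction in the proof of Proposition 8.**  Let `J`, `K` be commuting orthogonal
complex structures on a real inner product space `V`, and let `v ∈ V` satisfy
`⟪K(v), J(v)⟫ = 0`.  Setting `E₁ := v − K(J(v))` and `E₃ := v + K(J(v))`, one has
`J(E₁) = K(E₁)`, `J(E₃) = −K(E₃)`, `⟪E₁, E₃⟫ = 0`, `⟪J(E₁), E₃⟫ = 0`, and
`‖E₁‖² = ‖E₃‖² = 2‖v‖²`, so that `E₁ ≠ 0` and `E₃ ≠ 0` whenever `v ≠ 0`. -/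
theorem stmt6 {V : Type*} [NormedAddCommGroup V] [InnerProductSpace ℝ V]
    (J K : V →ₗ[ℝ] V)
    (hJorth : ∀ x y : V, ⟪J x, J y⟫ = ⟪x, y⟫) (hJ2 : J ∘ₗ J = -LinearMap.id)
    (hKorth : ∀ x y : V, ⟪K x, K y⟫ = ⟪x, y⟫) (hK2 : K ∘ₗ K = -LinearMap.id)
    (hcomm : J ∘ₗ K = K ∘ₗ J)
    (v : V) (hv : ⟪K v, J v⟫ = 0)
    (E₁ E₃ : V) (hE₁ : E₁ = v - K (J v)) (hE₃ : E₃ = v + K (J v)) :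
    J E₁ = K E₁ ∧
    J E₃ = -K E₃ ∧
    ⟪E₁, E₃⟫ = 0 ∧
    ⟪J E₁, E₃⟫ = 0 ∧
    (‖E₁‖ ^ 2 = 2 * ‖v‖ ^ 2 ∧ ‖E₃‖ ^ 2 = 2 * ‖v‖ ^ 2) ∧
    (v ≠ 0 → E₁ ≠ 0 ∧ E₃ ≠ 0) := by
  have hJJ : ∀ x : V, J (J x) = -x := fun x => by
    have := LinearMap.congr_fun hJ2 x; simpa using this
  have hKK : ∀ x : V, K (K x) = -x := fun x => by
    have := LinearMap.congr_fun hK2 x; simpa using this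
  have hJK : ∀ x : V, J (K x) = K (J x) := fun x => by
    have := LinearMap.congr_fun hcomm x; simpa using this
  -- skew-adjointness
  have hJskew : ∀ x y : V, ⟪J x, y⟫ = -⟪x, J y⟫ := fun x y => by
    have := hJorth x (J y); rw [hJJ, inner_neg_right] at this; linarith
  have hKskew : ∀ x y : V, ⟪K x, y⟫ = -⟪x, K y⟫ := fun x y => by
    have := hKorth x (K y); rw [hKK, inner_neg_right] at this; linarith
  have hJvv : ⟪J v, v⟫ = 0 := by
    have h := hJskew v v
    have h2 : ⟪J v, v⟫ = ⟪v, J v⟫ := real_inner_comm _ _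
    rw [h2] at *
    linarith [hJskew v v, real_inner_comm (J v) v]
  have hKvv : ⟪K v, v⟫ = 0 := by
    have h1 : ⟪K v, v⟫ = -⟪v, K v⟫ := hKskew v v
    have h2 : ⟪v, K v⟫ = ⟪K v, v⟫ := real_inner_comm _ _
    linarith
  have hJvKJv : ⟪J v, K (J v)⟫ = 0 := by
    have h1 : ⟪K (J v), J v⟫ = -⟪J v, K (J v)⟫ := hKskew (J v) (J v)
    have h2 : ⟪J v, K (J v)⟫ = ⟪K (J v), J v⟫ := real_inner_comm _ _
    linarith
  have hvKJv : ⟪v, K (J v)⟫ = 0 := by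
    have h1 : ⟪K v, J v⟫ = -⟪v, K (J v)⟫ := hKskew v (J v)
    linarith [hv]
  have hKvKJv : ⟪K v, K (J v)⟫ = 0 := by
    rw [hKorth, real_inner_comm]; exact hJvv
  have hnorm : ⟪K (J v), K (J v)⟫ = ⟪v, v⟫ := by rw [hKorth, hJorth]
  have hKJvv : ⟪K (J v), v⟫ = 0 := by rw [real_inner_comm]; exact hvKJv
  have hJE₁ : J E₁ = J v + K v := by
    simp [hE₁, map_sub, hJK, hJJ]
  have hKE₁ : K E₁ = K v + J v := by
    simp only [hE₁, map_sub, hKK, sub_neg_eq_add]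
  have hJE₃ : J E₃ = J v - K v := by
    simp [hE₃, map_add, hJK, hJJ]; abel
  have hKE₃ : K E₃ = K v - J v := by
    simp [hE₃, map_add, hKK]; abel
  have hn1 : ‖E₁‖ ^ 2 = 2 * ‖v‖ ^ 2 := by
    rw [← real_inner_self_eq_norm_sq, ← real_inner_self_eq_norm_sq, hE₁]
    simp only [inner_sub_left, inner_sub_right, hvKJv, hKJvv, hnorm]; ring
  have hn3 : ‖E₃‖ ^ 2 = 2 * ‖v‖ ^ 2 := by
    rw [← real_inner_self_eq_norm_sq, ← real_inner_self_eq_norm_sq, hE₃]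
    simp only [inner_add_left, inner_add_right, hvKJv, hKJvv, hnorm]; ring
  refine ⟨by rw [hJE₁, hKE₁]; abel, by rw [hJE₃, hKE₃]; abel, ?_, ?_, ⟨hn1, hn3⟩, ?_⟩
  · rw [hE₁, hE₃]
    simp only [inner_sub_left, inner_add_right, hvKJv, hKJvv, hnorm]; ring
  · rw [hJE₁, hE₃]
    have h1 : ⟪v, J v⟫ = 0 := by rw [real_inner_comm]; exact hJvv
    have h2 : ⟪v, K v⟫ = 0 := by rw [real_inner_comm]; exact hKvv
    simp [inner_add_left, inner_add_right, hJvv, hKvv, hJvKJv, hKvKJv, h1, h2]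
  · intro hvne
    have hvpos : (0:ℝ) < ‖v‖ ^ 2 := pow_pos (norm_pos_iff.mpr hvne) 2
    constructor <;> intro h
    · rw [h] at hn1; simp at hn1; exact hvne hn1
    · rw [h] at hn3; simp at hn3; exact hvne hn3
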